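/- Let (X, B, π) be a probability space, c ∈ [0,1), and P̂_c = cI + (1-c)Π on L²(π) where Πh = π(h)·1. Let f : X → ℝ be a bounded measurable function, and suppose r⋆ > c·esssup(e^f) satisfies π((1-c)e^f/(r⋆ - c e^f)) = 1. Then h⋆ = (1-c)e^{f/2}/(r⋆ - c e^f) ∈ L²(π) is an eigenfunction of the operator E^{f/2} P̂_c E^{f/2} (where E^{g} denotes multiplication by e^{g}) with eigenvalue r⋆. -/

import Mathlib

open MeasureTheory in
theorem stmt_9 {Ω : Type*} [MeasurableSpace Ω] (π : Measure Ω) [IsProbabilityMeasure π]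
    (c : ℝ) (hc : c ∈ Set.Ico (0:ℝ) 1) (f : Ω → ℝ) (hf : Measurable f)
    (C : ℝ) (hfb : ∀ x, |f x| ≤ C)
    (T : Lp ℝ 2 π →L[ℝ] Lp ℝ 2 π)
    (hT : ∀ h : Lp ℝ 2 π, (T h : Ω → ℝ) =ᵐ[π] fun x =>
      c * Real.exp (f x) * h x +
        (1 - c) * Real.exp (f x / 2) * ∫ y, Real.exp (f y / 2) * h y ∂π)
    (rstar : ℝ)
    (hr : c * essSup (fun x => Real.exp (f x)) π < rstar)
    (hF : ∫ x, (1 - c) * Real.exp (f x) / (rstar - c * Real.exp (f x)) ∂π = 1) :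
    ∃ hmem : MemLp (fun x => (1 - c) * Real.exp (f x / 2) /
        (rstar - c * Real.exp (f x))) 2 π,
      T (hmem.toLp _) = rstar • hmem.toLp _ := by
  obtain ⟨hc0, hc1⟩ := hc
  set S := essSup (fun x => Real.exp (f x)) π with hS
  set h : Ω → ℝ := fun x => (1 - c) * Real.exp (f x / 2) / (rstar - c * Real.exp (f x))
    with hh
  have hδ : 0 < rstar - c * S := by linarith
  have hbd : Filter.IsBoundedUnder (· ≤ ·) (ae π) (fun x => Real.exp (f x)) :=
    Filter.isBoundedUnder_of ⟨Real.exp C, fun x => Real.exp_le_exp.2 ((abs_le.1 (hfb x)).2)⟩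
  have hae : ∀ᵐ x ∂π, rstar - c * S ≤ rstar - c * Real.exp (f x) := by
    filter_upwards [ae_le_essSup hbd] with x hx
    have : c * Real.exp (f x) ≤ c * S := mul_le_mul_of_nonneg_left hx hc0
    linarith
  have hmeas : Measurable h :=
    (measurable_const.mul ((hf.div_const 2).exp)).div
      (measurable_const.sub (measurable_const.mul hf.exp))
  have hmem : MemLp h 2 π := by
    apply MemLp.of_bound hmeas.aestronglyMeasurable
      ((1 - c) * Real.exp (C / 2) / (rstar - c * S))
    filter_upwards [hae] with x hx
    have hdpos : 0 < rstar - c * Real.exp (f x) := lt_of_lt_of_le hδ hx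
    have hnum : (1 - c) * Real.exp (f x / 2) ≤ (1 - c) * Real.exp (C / 2) := by
      apply mul_le_mul_of_nonneg_left _ (by linarith)
      exact Real.exp_le_exp.2 (by have := (abs_le.1 (hfb x)).2; linarith)
    have hnn : 0 ≤ (1 - c) * Real.exp (f x / 2) :=
      mul_nonneg (by linarith) (Real.exp_pos _).le
    rw [hh, Real.norm_eq_abs, abs_div, abs_of_nonneg hnn, abs_of_pos hdpos]
    exact div_le_div₀ (mul_nonneg (by linarith) (Real.exp_pos _).le) hnum hδ hx
  refine ⟨hmem, ?_⟩
  have hI : ∫ y, Real.exp (f y / 2) * h y ∂π = 1 := by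
    have heq : (fun y => Real.exp (f y / 2) * h y) =
        fun y => (1 - c) * Real.exp (f y) / (rstar - c * Real.exp (f y)) := by
      funext y
      have he : Real.exp (f y) = Real.exp (f y / 2) * Real.exp (f y / 2) := by
        rw [← Real.exp_add]; ring_nf
      rw [hh]; simp only []; rw [he]; ring
    rw [heq, hF]
  have hI' : ∫ y, Real.exp (f y / 2) * (hmem.toLp h : Ω → ℝ) y ∂π = 1 := by
    rw [← hI]
    exact integral_congr_ae (hmem.coeFn_toLp.mono fun y hy => by dsimp only; rw [hy])
  apply Lp.ext
  filter_upwards [hT (hmem.toLp h), hmem.coeFn_toLp, hae,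
    Lp.coeFn_smul rstar (hmem.toLp h)] with x hTx htl hx hsm
  rw [hTx, hsm]
  simp only [Pi.smul_apply, smul_eq_mul]
  rw [htl, hI', hh]
  have hdpos : rstar - c * Real.exp (f x) ≠ 0 := (lt_of_lt_of_le hδ hx).ne'
  field_simp
  ring
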